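/- Let ℓ : ℝ × {0,1} → ℝ be a loss function that is symmetric, i.e., there exists a constant C such that ℓ(z,0) + ℓ(z,1) = C for all z ∈ ℝ. Consider binary classification with uniform label noise of rate η (each label is flipped independently with probability η). Then for any predictor f, the noisy risk satisfies R_η(f) = (1 − 2η)·R(f) + η·C, where R(f) is the clean risk. -/
import Mathlib

open MeasureTheory

/-- Symmetric loss under uniform label noise: the noisy risk equals
`(1 - 2η) R(f) + η C`. -/
theorem noisy_risk_eq {X : Type*} [MeasurableSpace X]
    (μ : Measure (X × Bool)) [IsProbabilityMeasure μ]
    (ℓ : ℝ → Bool → ℝ) (C : ℝ) (hsym : ∀ z, ℓ z false + ℓ z true = C)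
    (η : ℝ) (f : X → ℝ)
    (hint : Integrable (fun p : X × Bool => ℓ (f p.1) p.2) μ) :
    ∫ p, ((1 - η) * ℓ (f p.1) p.2 + η * ℓ (f p.1) (!p.2)) ∂μ
      = (1 - 2 * η) * ∫ p, ℓ (f p.1) p.2 ∂μ + η * C := by
  have h : ∀ p : X × Bool,
      (1 - η) * ℓ (f p.1) p.2 + η * ℓ (f p.1) (!p.2)
        = (1 - 2 * η) * ℓ (f p.1) p.2 + η * C := by
    intro p
    have := hsym (f p.1)
    cases hb : p.2 <;> simp [hb] <;> linear_combination η * this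
  simp_rw [h]
  rw [integral_add (hint.const_mul _) (integrable_const _),
    integral_const_mul, integral_const]
  simp
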